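/- Let w be a permutation and U = {i_1 < i_2 < ⋯ < i_k} a nonempty subset of φ_i(w), and set w_{U,i} = w t_{i,i_k} t_{i,i_{k-1}} ⋯ t_{i,i_1}. Then rk_w(a,b) - rk_{w_{U,i}}(a,b) = 1 if (a,b) lies in the union over h of [i, i_h - 1] × [w(i), w(i_h) - 1], and equals 0 otherwise. -/

import Mathlib

/-- Coxeter length of a permutation of `Fin n`: number of inversions. -/
def len {n : ℕ} (w : Equiv.Perm (Fin n)) : ℕ :=
  (Finset.univ.filter (fun p : Fin n × Fin n => p.1 < p.2 ∧ w p.2 < w p.1)).card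

/-- The longest permutation `w₀` of `S_n` (reversal). -/
def longest (n : ℕ) : Equiv.Perm (Fin n) := Fin.revPerm

/-- The simple transposition `s_i` (1-based index `i ∈ [n-1]`), exchanging
positions `i` and `i+1` of the one-line notation. -/
def simpleRefl (n i : ℕ) : Equiv.Perm (Fin n) :=
  if h : 1 ≤ i ∧ i < n then Equiv.swap ⟨i - 1, by omega⟩ ⟨i, by omega⟩ else 1

/-- The Hecke (Demazure) up-operator: `w * τ_i = w` if `ℓ(w s_i) < ℓ(w)`, else `w s_i`. -/
def heckeStar {n : ℕ} (w : Equiv.Perm (Fin n)) (i : ℕ) : Equiv.Perm (Fin n) :=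
  if len (w * simpleRefl n i) < len w then w else w * simpleRefl n i

/-- The down-operator: `w □ τ_i = w` if `ℓ(w s_i) > ℓ(w)`, else `w s_i`. -/
def heckeSq {n : ℕ} (w : Equiv.Perm (Fin n)) (i : ℕ) : Equiv.Perm (Fin n) :=
  if len w < len (w * simpleRefl n i) then w else w * simpleRefl n i

/-- The rank function of a permutation: `rk_w(a,b) = #{i ∈ [a] : w(i) ∈ [b]}`
(here encoded 0-based: positions `m` with `m < a` and values `w(m) < b`). -/
def rk {n : ℕ} (w : Equiv.Perm (Fin n)) (a b : ℕ) : ℕ :=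
  (Finset.univ.filter (fun m : Fin n => (m : ℕ) < a ∧ (w m : ℕ) < b)).card

/-- Bruhat order on `S_n`: the reflexive-transitive closure of the covering
relation `u ⋖ u t` with `t` a transposition and `ℓ(ut) = ℓ(u) + 1`. -/
def bruhatLE {n : ℕ} (u v : Equiv.Perm (Fin n)) : Prop :=
  Relation.ReflTransGen
    (fun x y => (∃ t : Equiv.Perm (Fin n), t.IsSwap ∧ y = x * t) ∧ len y = len x + 1) u v

/-- `(a, w a)` is a neighbor of `(i, w i)` in the graph of `w ∈ S_n`:
`i ≤ a`, `w i ≤ w a`, `(a, w a) ≠ (i, w i)`, and no other point of the graph of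
`w` lies in the rectangle `[i,a] × [w i, w a]`. -/
def isNbrF {n : ℕ} (w : Equiv.Perm (Fin n)) (i a : Fin n) : Prop :=
  i ≤ a ∧ w i ≤ w a ∧ (a, w a) ≠ (i, w i) ∧
    ∀ a' : Fin n, i ≤ a' → a' ≤ a → w i ≤ w a' → w a' ≤ w a → a' = i ∨ a' = a

/-- For `U = {i_1 < i_2 < ⋯ < i_k}`, the permutation
`w_{U,i} = w t_{i,i_k} t_{i,i_{k-1}} ⋯ t_{i,i_1}` (and `w_{∅,i} = w`). -/
def wUF {n : ℕ} (w : Equiv.Perm (Fin n)) (i : Fin n) (U : Finset (Fin n)) :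
    Equiv.Perm (Fin n) :=
  ((U.sort (· ≤ ·)).reverse).foldl (fun v j => v * Equiv.swap i j) w

-- basic neighbor facts
lemma nbr_pos_lt {n : ℕ} {w : Equiv.Perm (Fin n)} {i h : Fin n} (hh : isNbrF w i h) :
    (i : ℕ) < h := by
  obtain ⟨h1, h2, h3, _⟩ := hh
  rcases lt_or_eq_of_le h1 with hlt | he
  · exact hlt
  · exact absurd (by rw [he]) h3

lemma nbr_val_lt {n : ℕ} {w : Equiv.Perm (Fin n)} {i h : Fin n} (hh : isNbrF w i h) :
    (w i : ℕ) < w h := by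
  have hpos := nbr_pos_lt hh
  obtain ⟨h1, h2, h3, _⟩ := hh
  rcases lt_or_eq_of_le h2 with hlt | he
  · exact hlt
  · have : i = h := w.injective he
    subst this; omega

lemma nbr_anti {n : ℕ} {w : Equiv.Perm (Fin n)} {i g h : Fin n}
    (hg : isNbrF w i g) (hh : isNbrF w i h) (hgh : (g : ℕ) < h) :
    (w h : ℕ) < w g := by
  rcases lt_trichotomy ((w h : ℕ)) ((w g : ℕ)) with hc | hc | hc
  · exact hc
  · exact absurd (w.injective (Fin.ext hc)) (by intro he; omega)
  · -- w g < w h : g lies in rectangle of h, contradiction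
    obtain ⟨h1, h2, h3, h4⟩ := hh
    have := h4 g (le_of_lt (Fin.lt_def.mpr (nbr_pos_lt hg))) (le_of_lt (Fin.lt_def.mpr hgh))
      (le_of_lt (Fin.lt_def.mpr (nbr_val_lt hg))) (le_of_lt (Fin.lt_def.mpr hc))
    rcases this with h5 | h5
    · exact absurd (h5 ▸ nbr_pos_lt hg) (by omega)
    · omega

lemma wUF_empty {n : ℕ} (w : Equiv.Perm (Fin n)) (i : Fin n) : wUF w i ∅ = w := by
  simp [wUF]

lemma wUF_min_step {n : ℕ} (w : Equiv.Perm (Fin n)) (i : Fin n) (U : Finset (Fin n))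
    (hne : U.Nonempty) :
    wUF w i U = wUF w i (U.erase (U.min' hne)) * Equiv.swap i (U.min' hne) := by
  set m := U.min' hne with hm
  have hsort : U.sort (· ≤ ·) = m :: (U.erase m).sort (· ≤ ·) := by
    have h1 : ∀ b ∈ U.erase m, m ≤ b := fun b hb =>
      U.min'_le b (Finset.mem_of_mem_erase hb)
    have h2 : m ∉ U.erase m := Finset.notMem_erase m U
    rw [← Finset.sort_insert (· ≤ ·) h1 h2, Finset.insert_erase (U.min'_mem hne)]
  rw [wUF, hsort, List.reverse_cons, List.foldl_append]
  rfl

lemma wUF_apply_ne {n : ℕ} (w : Equiv.Perm (Fin n)) (i : Fin n) (U : Finset (Fin n))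
    {m : Fin n} (hmU : m ∉ U) (hmi : m ≠ i) : wUF w i U m = w m := by
  have key : ∀ (l : List (Fin n)) (v : Equiv.Perm (Fin n)), m ∉ l →
      (l.foldl (fun v j => v * Equiv.swap i j) v) m = v m := by
    intro l
    induction l with
    | nil => intro v _; rfl
    | cons j l ih =>
      intro v hml
      have hmj : m ≠ j := fun h => hml (h ▸ List.mem_cons_self (a := j) (l := l))
      have hml' : m ∉ l := fun h => hml (List.mem_cons_of_mem j h)
      rw [List.foldl_cons, ih _ hml']
      simp [Equiv.Perm.mul_apply, Equiv.swap_apply_of_ne_of_ne hmi hmj]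
  apply key
  simp [List.mem_reverse, Finset.mem_sort, hmU]

lemma wUF_apply_i {n : ℕ} (w : Equiv.Perm (Fin n)) (i : Fin n) (U : Finset (Fin n))
    (hne : U.Nonempty) (hi : i ∉ U) : wUF w i U i = w (U.min' hne) := by
  rw [wUF_min_step w i U hne]
  have h1 : U.min' hne ∉ U.erase (U.min' hne) := Finset.notMem_erase _ _
  have h2 : U.min' hne ≠ i := fun h => hi (h ▸ U.min'_mem hne)
  simp only [Equiv.Perm.mul_apply, Equiv.swap_apply_left]
  exact wUF_apply_ne w i _ h1 h2

lemma rk_mul_swap {n : ℕ} (w : Equiv.Perm (Fin n)) (i j : Fin n)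
    (hij : (i : ℕ) < j) (hw : (w i : ℕ) < w j) (a b : ℕ) :
    rk w a b = rk (w * Equiv.swap i j) a b +
      (if (i : ℕ) < a ∧ a ≤ (j : ℕ) ∧ (w i : ℕ) < b ∧ b ≤ (w j : ℕ) then 1 else 0) := by
  have hij' : i ≠ j := fun h => by rw [h] at hij; omega
  have hji' : j ≠ i := hij'.symm
  have hjmem : j ∈ Finset.univ.erase i := Finset.mem_erase.mpr ⟨hji', Finset.mem_univ j⟩
  have key : ∀ (F : Fin n → ℕ), ∑ m, F m = (∑ m ∈ (Finset.univ.erase i).erase j, F m) + F j + F i := by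
    intro F
    rw [Finset.sum_erase_add _ _ hjmem, Finset.sum_erase_add _ _ (Finset.mem_univ i)]
  have hrk : ∀ v : Equiv.Perm (Fin n), rk v a b =
      ∑ m : Fin n, (if (m : ℕ) < a ∧ (v m : ℕ) < b then 1 else 0) := by
    intro v; rw [rk, Finset.card_filter]
  rw [hrk, hrk, key, key]
  have htail : ∀ m ∈ (Finset.univ.erase i).erase j,
      (if (m : ℕ) < a ∧ (w m : ℕ) < b then (1:ℕ) else 0) =
      (if (m : ℕ) < a ∧ ((w * Equiv.swap i j) m : ℕ) < b then 1 else 0) := by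
    intro m hm
    obtain ⟨hmj, hmi, _⟩ : m ≠ j ∧ m ≠ i ∧ True := by
      simp only [Finset.mem_erase] at hm; exact ⟨hm.1, hm.2.1, trivial⟩
    rw [Equiv.Perm.mul_apply, Equiv.swap_apply_of_ne_of_ne hmi hmj]
  rw [Finset.sum_congr rfl htail]
  simp only [Equiv.Perm.mul_apply, Equiv.swap_apply_left, Equiv.swap_apply_right]
  split_ifs <;> omega

lemma main_aux {n : ℕ} (w : Equiv.Perm (Fin n)) (i : Fin n) :
    ∀ U : Finset (Fin n), (∀ h ∈ U, isNbrF w i h) → ∀ a b : ℕ,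
    ((∃ h ∈ U, (i : ℕ) < a ∧ a ≤ (h : ℕ) ∧ (w i : ℕ) < b ∧ b ≤ (w h : ℕ)) →
        rk w a b = rk (wUF w i U) a b + 1) ∧
    ((¬ ∃ h ∈ U, (i : ℕ) < a ∧ a ≤ (h : ℕ) ∧ (w i : ℕ) < b ∧ b ≤ (w h : ℕ)) →
        rk w a b = rk (wUF w i U) a b) := by
  intro U
  induction U using Finset.strongInduction with
  | _ U IH =>
    intro hU a b
    by_cases hne : U.Nonempty
    case neg =>
      rw [Finset.not_nonempty_iff_eq_empty] at hne; subst hne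
      rw [wUF_empty]
      exact ⟨fun ⟨h, hh, _⟩ => absurd hh (Finset.notMem_empty h), fun _ => rfl⟩
    case pos =>
      set m := U.min' hne with hmdef
      have hmU : m ∈ U := U.min'_mem hne
      have hm : isNbrF w i m := hU m hmU
      have him : (i : ℕ) < m := nbr_pos_lt hm
      have hwim : (w i : ℕ) < w m := nbr_val_lt hm
      have hmi : m ≠ i := fun h => by rw [h] at him; omega
      set U' := U.erase m with hU'def
      have hsub : U' ⊂ U := Finset.erase_ssubset hmU
      have hU' : ∀ h ∈ U', isNbrF w i h := fun h hh => hU h (Finset.mem_of_mem_erase hh)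
      have IH' := IH U' hsub hU' a b
      set w' := wUF w i U' with hw'def
      have hstep : wUF w i U = w' * Equiv.swap i m := wUF_min_step w i U hne
      have hw'm : w' m = w m := wUF_apply_ne w i U' (Finset.notMem_erase m U) hmi
      by_cases h2ne : U'.Nonempty
      · -- inductive case
        set m₂ := U'.min' h2ne with hm2def
        have hm2U' : m₂ ∈ U' := U'.min'_mem h2ne
        have hm2U : m₂ ∈ U := by
          have h := hm2U'; rw [hU'def] at h; exact Finset.mem_of_mem_erase h
        have hm2 : isNbrF w i m₂ := hU m₂ hm2U
        have hwim2 : (w i : ℕ) < w m₂ := nbr_val_lt hm2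
        have him2 : (m : ℕ) < m₂ := by
          have h1 : m ≤ m₂ := U.min'_le m₂ hm2U
          have h2 : m ≠ m₂ := by
            intro h
            have hh := hm2U'
            rw [hU'def, h] at hh
            exact Finset.notMem_erase m₂ U hh
          have h3 : (m : ℕ) ≠ m₂ := fun h => h2 (Fin.ext h)
          have h4 : (m : ℕ) ≤ m₂ := h1
          omega
        have hwm2 : (w m₂ : ℕ) < w m := nbr_anti hm hm2 him2
        have hiU' : i ∉ U' := fun h => by have := nbr_pos_lt (hU' i h); omega
        have hw'i : w' i = w m₂ := wUF_apply_i w i U' h2ne hiU'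
        have hval : ∀ h ∈ U', (w h : ℕ) ≤ w m₂ := by
          intro h hh
          by_cases he : h = m₂
          · subst he; exact le_refl _
          · have h1 : m₂ ≤ h := U'.min'_le h hh
            have h2 : (m₂ : ℕ) ≠ h := fun hc => he (Fin.ext hc.symm)
            have h3 : (m₂ : ℕ) ≤ h := h1
            exact le_of_lt (nbr_anti hm2 (hU' h hh) (by omega))
        have hswap : rk w' a b = rk (wUF w i U) a b +
            (if (i : ℕ) < a ∧ a ≤ (m : ℕ) ∧ (w m₂ : ℕ) < b ∧ b ≤ (w m : ℕ) then 1 else 0) := by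
          rw [hstep]
          have := rk_mul_swap w' i m him (by rw [hw'i, hw'm]; exact hwm2) a b
          rw [hw'i, hw'm] at this
          exact this
        have hdisj : ¬(((i : ℕ) < a ∧ a ≤ (m : ℕ) ∧ (w m₂ : ℕ) < b ∧ b ≤ (w m : ℕ)) ∧
            (∃ h ∈ U', (i : ℕ) < a ∧ a ≤ (h : ℕ) ∧ (w i : ℕ) < b ∧ b ≤ (w h : ℕ))) := by
          rintro ⟨⟨_, _, hb, _⟩, ⟨h, hhU', _, _, _, hbh⟩⟩
          have := hval h hhU'
          omega
        have hBiff : (∃ h ∈ U, (i : ℕ) < a ∧ a ≤ (h : ℕ) ∧ (w i : ℕ) < b ∧ b ≤ (w h : ℕ)) ↔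
            (((i : ℕ) < a ∧ a ≤ (m : ℕ) ∧ (w m₂ : ℕ) < b ∧ b ≤ (w m : ℕ)) ∨
             (∃ h ∈ U', (i : ℕ) < a ∧ a ≤ (h : ℕ) ∧ (w i : ℕ) < b ∧ b ≤ (w h : ℕ))) := by
          constructor
          · rintro ⟨h, hhU, c1, c2, c3, c4⟩
            by_cases hh : h = m
            · subst hh
              by_cases hb : b ≤ (w m₂ : ℕ)
              · exact Or.inr ⟨m₂, hm2U', c1, by omega, c3, hb⟩
              · exact Or.inl ⟨c1, c2, by omega, c4⟩
            · exact Or.inr ⟨h, Finset.mem_erase.mpr ⟨hh, hhU⟩, c1, c2, c3, c4⟩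
          · rintro (⟨r1, r2, r3, r4⟩ | ⟨h, hhU', c⟩)
            · exact ⟨m, hmU, r1, r2, by omega, r4⟩
            · exact ⟨h, Finset.mem_of_mem_erase hhU', c⟩
        constructor
        · intro hB
          rcases hBiff.mp hB with hR | hB'
          · have e1 := IH'.2 (fun hB' => hdisj ⟨hR, hB'⟩)
            have e2 : rk w' a b = rk (wUF w i U) a b + 1 := by rw [hswap, if_pos hR]
            omega
          · have e1 := IH'.1 hB'
            have e2 : rk w' a b = rk (wUF w i U) a b := by
              rw [hswap, if_neg (fun hR => hdisj ⟨hR, hB'⟩)]; omega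
            omega
        · intro hB
          have hnR := fun hR => hB (hBiff.mpr (Or.inl hR))
          have hnB' := fun h => hB (hBiff.mpr (Or.inr h))
          have e1 := IH'.2 hnB'
          have e2 : rk w' a b = rk (wUF w i U) a b := by rw [hswap, if_neg hnR]; omega
          omega
      · -- base case : U = {m}
        rw [Finset.not_nonempty_iff_eq_empty] at h2ne
        have hw'eq : w' = w := by rw [hw'def, h2ne, wUF_empty]
        have hUsing : ∀ x ∈ U, x = m := by
          intro x hx
          by_contra hxm
          exact absurd (Finset.mem_erase.mpr ⟨hxm, hx⟩) (by rw [← hU'def, h2ne]; simp)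
        have hswap : rk w a b = rk (wUF w i U) a b +
            (if (i : ℕ) < a ∧ a ≤ (m : ℕ) ∧ (w i : ℕ) < b ∧ b ≤ (w m : ℕ) then 1 else 0) := by
          rw [hstep, hw'eq]
          exact rk_mul_swap w i m him hwim a b
        constructor
        · rintro ⟨h, hhU, c⟩
          have := hUsing h hhU; subst this
          rw [hswap, if_pos c]
        · intro hB
          rw [hswap, if_neg (fun hR => hB ⟨m, hmU, hR⟩)]; omega

/-- Lemma 4.5: for nonempty `U = {i_1 < ⋯ < i_k} ⊆ φ_i(w)`,
`rk_w(a,b) - rk_{w_{U,i}}(a,b) = 1` if `(a,b)` lies in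
`⋃_h [i, i_h - 1] × [w(i), w(i_h) - 1]` (expressed here in the 0-based
encoding as `i < a ≤ i_h` and `w(i) < b ≤ w(i_h)`), and `= 0` otherwise. -/
theorem rank_diff_wU {n : ℕ} (w : Equiv.Perm (Fin n)) (i : Fin n)
    (U : Finset (Fin n)) (hne : U.Nonempty) (hU : ∀ a ∈ U, isNbrF w i a)
    (a b : ℕ) (ha : a ≤ n) (hb : b ≤ n) :
    ((∃ h ∈ U, (i : ℕ) < a ∧ a ≤ (h : ℕ) ∧ (w i : ℕ) < b ∧ b ≤ (w h : ℕ)) →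
        rk w a b = rk (wUF w i U) a b + 1) ∧
    ((¬ ∃ h ∈ U, (i : ℕ) < a ∧ a ≤ (h : ℕ) ∧ (w i : ℕ) < b ∧ b ≤ (w h : ℕ)) →
        rk w a b = rk (wUF w i U) a b) :=
  main_aux w i U hU a b
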